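/- Let A be a symmetric n×n integer matrix whose diagonal entries are all even. Then there exists an integer matrix P with det(P) = ±1 such that P^T A P reduced modulo 4 is a block diagonal matrix of the form diag(r·[[2,1],[1,2]], s·[[0,1],[1,0]], t·[[0,2],[2,0]], p·[2], m·[0]) for some non-negative integers r, s, t, p, m (where k·M denotes k diagonal copies of the block M). -/

import Mathlib

/-- Entry `(i,j)` of the block diagonal matrix
`diag(r·[[2,1],[1,2]], s·[[0,1],[1,0]], t·[[0,2],[2,0]], p·[2], m·[0])`
(the `m` trailing zero rows/columns are implicit: the entry is `0` there). -/
def nfEntry (r s t p : ℕ) (i j : ℕ) : ℤ :=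
  if i < 2*r ∧ j < 2*r then (if i = j then 2 else if i / 2 = j / 2 then 1 else 0)
  else if 2*r ≤ i ∧ i < 2*r+2*s ∧ 2*r ≤ j ∧ j < 2*r+2*s then
    (if i ≠ j ∧ i / 2 = j / 2 then 1 else 0)
  else if 2*r+2*s ≤ i ∧ i < 2*r+2*s+2*t ∧ 2*r+2*s ≤ j ∧ j < 2*r+2*s+2*t then
    (if i ≠ j ∧ i / 2 = j / 2 then 2 else 0)
  else if 2*r+2*s+2*t ≤ i ∧ i < 2*r+2*s+2*t+p ∧ i = j then 2
  else 0

open Matrix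

abbrev R4 := ZMod 4

/-- reduction mod 4 of an integer matrix -/
def mp {ι κ : Type*} (P : Matrix ι κ ℤ) : Matrix ι κ R4 := P.map (Int.cast)

lemma mp_mul {ι κ γ : Type*} [Fintype κ] (P : Matrix ι κ ℤ) (Q : Matrix κ γ ℤ) :
    mp (P * Q) = mp P * mp Q := by
  simpa [mp] using Matrix.map_mul (L := P) (M := Q) (f := Int.castRingHom R4)

lemma mp_transpose {ι κ : Type*} (P : Matrix ι κ ℤ) : mp Pᵀ = (mp P)ᵀ := rfl

/-- integral congruence mod 4 -/
def Cong {ι : Type*} [Fintype ι] [DecidableEq ι] (A B : Matrix ι ι R4) : Prop :=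
  ∃ P : Matrix ι ι ℤ, (P.det = 1 ∨ P.det = -1) ∧ (mp P)ᵀ * A * (mp P) = B

lemma Cong.refl {ι : Type*} [Fintype ι] [DecidableEq ι] (A : Matrix ι ι R4) : Cong A A :=
  ⟨1, Or.inl (Matrix.det_one), by simp [mp]⟩

lemma Cong.trans {ι : Type*} [Fintype ι] [DecidableEq ι] {A B C : Matrix ι ι R4}
    (h1 : Cong A B) (h2 : Cong B C) : Cong A C := by
  obtain ⟨P, hP, hPE⟩ := h1
  obtain ⟨Q, hQ, hQE⟩ := h2
  refine ⟨P * Q, ?_, ?_⟩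
  · rw [Matrix.det_mul]; rcases hP with h | h <;> rcases hQ with h' | h' <;>
      simp [h, h']
  · rw [mp_mul, Matrix.transpose_mul, ← hQE, ← hPE]; noncomm_ring

lemma Cong.perm {ι : Type*} [Fintype ι] [DecidableEq ι] (A : Matrix ι ι R4) (σ : Equiv.Perm ι) :
    Cong A (A.submatrix σ σ) := by
  refine ⟨(σ⁻¹ : Equiv.Perm ι).permMatrix ℤ, ?_, ?_⟩
  · have := Matrix.det_permutation (σ⁻¹ : Equiv.Perm ι) (R := ℤ)
    rcases Int.units_eq_one_or (Equiv.Perm.sign σ⁻¹) with h | h <;> rw [h] at this <;> simp_all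
  · have hmp : mp ((σ⁻¹ : Equiv.Perm ι).permMatrix ℤ) = (σ⁻¹ : Equiv.Perm ι).permMatrix R4 := by
      ext i j
      simp only [mp, Equiv.Perm.permMatrix, PEquiv.toMatrix, Matrix.map_apply, Matrix.of_apply]
      split <;> simp
    rw [hmp]
    have h1 : ((σ⁻¹ : Equiv.Perm ι).permMatrix R4)ᵀ = (σ : Equiv.Perm ι).permMatrix R4 := by
      rw [Equiv.Perm.permMatrix, Equiv.Perm.permMatrix, ← PEquiv.toMatrix_symm, ← Equiv.toPEquiv_symm]
      rfl
    rw [h1, Equiv.Perm.permMatrix, PEquiv.toMatrix_toPEquiv_mul, Equiv.Perm.permMatrix,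
      PEquiv.mul_toMatrix_toPEquiv]
    ext i j
    simp [Matrix.submatrix_apply, Equiv.Perm.inv_def]

def Ev (x : R4) : Prop := x = 0 ∨ x = 2

def φ2 : R4 →+* ZMod 2 := ZMod.castHom (show 2 ∣ 4 by norm_num) (ZMod 2)

lemma Ev_iff (x : R4) : Ev x ↔ φ2 x = 0 := by unfold Ev φ2; revert x; decide

lemma sum_symm_zero {ι : Type*} [Fintype ι] [DecidableEq ι] (M : Matrix ι ι (ZMod 2))
    (hsym : ∀ a b, M a b = M b a) (hd : ∀ a, M a a = 0) :
    ∑ a : ι, ∑ b : ι, M a b = 0 := by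
  rw [← Fintype.sum_prod_type' (f := fun a b => M a b)]
  refine Finset.sum_involution (fun p _ => (p.2, p.1)) ?_ ?_ ?_ ?_
  · intro a _
    rw [hsym a.2 a.1]
    exact CharTwo.add_self_eq_zero _
  · intro a _ hne h
    apply hne
    have h1 : a.2 = a.1 := congrArg Prod.fst h
    rw [← h1, hd a.2]
  · intro a ha; simp
  · intro a _; rfl

lemma conj_even {ι : Type*} [Fintype ι] [DecidableEq ι] (A : Matrix ι ι R4) (Q : Matrix ι ι R4)
    (hsym : A.IsSymm) (hd : ∀ i, Ev (A i i)) (i : ι) : Ev ((Qᵀ * A * Q) i i) := by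
  rw [Ev_iff]
  have : (Qᵀ * A * Q) i i = ∑ a : ι, ∑ b : ι, A a b * Q a i * Q b i := by
    rw [Matrix.mul_apply]
    simp only [Matrix.mul_apply, Finset.sum_mul]
    rw [Finset.sum_comm]
    congr 1; ext a; congr 1; ext b; simp [Matrix.transpose_apply]; ring
  rw [this]
  rw [map_sum]
  have : ∀ a, φ2 (∑ b : ι, A a b * Q a i * Q b i) = ∑ b, (φ2 (A a b) * φ2 (Q a i) * φ2 (Q b i)) := by
    intro a; rw [map_sum]; simp
  simp only [this]
  exact sum_symm_zero (fun a b => φ2 (A a b) * φ2 (Q a i) * φ2 (Q b i))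
    (fun a b => by beta_reduce; rw [hsym.apply a b]; ring)
    (fun a => by beta_reduce; rw [(Ev_iff _).mp (hd a)]; ring)

lemma Cong.isSymm {ι : Type*} [Fintype ι] [DecidableEq ι] {A B : Matrix ι ι R4}
    (h : Cong A B) (hsym : A.IsSymm) : B.IsSymm := by
  obtain ⟨P, _, rfl⟩ := h
  unfold Matrix.IsSymm
  rw [Matrix.transpose_mul, Matrix.transpose_mul, Matrix.transpose_transpose, hsym.eq,
    Matrix.mul_assoc]

lemma Cong.submatrix {ι κ : Type*} [Fintype ι] [DecidableEq ι] [Fintype κ] [DecidableEq κ]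
    {A B : Matrix ι ι R4} (e : κ ≃ ι) (h : Cong A B) :
    Cong (A.submatrix e e) (B.submatrix e e) := by
  obtain ⟨P, hdet, hPE⟩ := h
  refine ⟨P.submatrix e e, ?_, ?_⟩
  · rwa [Matrix.det_submatrix_equiv_self]
  · have : mp (P.submatrix e e) = (mp P).submatrix e e := rfl
    rw [this, Matrix.transpose_submatrix, Matrix.submatrix_mul_equiv, Matrix.submatrix_mul_equiv,
      hPE]

lemma mp_fromBlocks {a b c d : Type*} (B : Matrix a b ℤ) (C : Matrix c b ℤ) (Y : Matrix a d ℤ)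
    (D : Matrix c d ℤ) : mp (fromBlocks B Y C D) = fromBlocks (mp B) (mp Y) (mp C) (mp D) :=
  Matrix.fromBlocks_map B Y C D _

lemma mp_one {ι : Type*} [Fintype ι] [DecidableEq ι] : mp (1 : Matrix ι ι ℤ) = 1 := by
  simp [mp]

lemma mp_zero {ι κ : Type*} : mp (0 : Matrix ι κ ℤ) = 0 := by simp [mp]

lemma Cong.split {ι κ : Type*} [Fintype ι] [DecidableEq ι] [Fintype κ] [DecidableEq κ]
    (A : Matrix (ι ⊕ κ) (ι ⊕ κ) R4) (hsym : A.IsSymm)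
    (Z : Matrix ι κ ℤ) (hZ : A.toBlocks₁₁ * mp Z = - A.toBlocks₁₂) :
    Cong A (fromBlocks A.toBlocks₁₁ 0 0 (A.toBlocks₂₁ * mp Z + A.toBlocks₂₂)) := by
  have hB : (A.toBlocks₁₁)ᵀ = A.toBlocks₁₁ := by
    ext i j; simp [Matrix.toBlocks₁₁, hsym.apply]
  have hW : (A.toBlocks₁₂)ᵀ = A.toBlocks₂₁ := by
    ext i j; simp [Matrix.toBlocks₁₂, Matrix.toBlocks₂₁, hsym.apply]
  refine ⟨fromBlocks 1 Z 0 1, ?_, ?_⟩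
  · left
    rw [Matrix.det_fromBlocks_zero₂₁]; simp
  · rw [mp_fromBlocks]
    simp only [mp_one, mp_zero]
    conv_lhs => rw [← Matrix.fromBlocks_toBlocks A]
    rw [Matrix.fromBlocks_transpose, Matrix.fromBlocks_multiply, Matrix.fromBlocks_multiply]
    have h1 : A.toBlocks₁₁ * mp Z + A.toBlocks₁₂ = 0 := by rw [hZ]; exact neg_add_cancel _
    have h2 : (mp Z)ᵀ * A.toBlocks₁₁ + A.toBlocks₂₁ = 0 := by
      rw [← hB, ← Matrix.transpose_mul, hZ, ← hW]; simp
    simp only [Matrix.transpose_one, Matrix.transpose_zero, Matrix.one_mul, Matrix.mul_one,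
      Matrix.zero_mul, Matrix.mul_zero, add_zero, zero_add, Matrix.mul_add, Matrix.add_mul]
    have e2 : A.toBlocks₁₂ = -(A.toBlocks₁₁ * mp Z) := by rw [hZ, neg_neg]
    have e3 : (mp Z)ᵀ * A.toBlocks₁₁ = -A.toBlocks₂₁ := eq_neg_of_add_eq_zero_left h2
    simp only [Matrix.mul_one, Matrix.one_mul, h1, h2, e3, e2, Matrix.mul_neg, Matrix.neg_mul,
      ← Matrix.mul_assoc]
    congr 1 <;> abel

lemma Cong.block2 {ι κ : Type*} [Fintype ι] [DecidableEq ι] [Fintype κ] [DecidableEq κ]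
    (B : Matrix ι ι R4) {C D : Matrix κ κ R4} (h : Cong C D) :
    Cong (fromBlocks B 0 0 C) (fromBlocks B 0 0 D) := by
  obtain ⟨P, hdet, hPE⟩ := h
  refine ⟨fromBlocks 1 0 0 P, ?_, ?_⟩
  · rw [Matrix.det_fromBlocks_zero₂₁, Matrix.det_one, one_mul]; exact hdet
  · rw [mp_fromBlocks]
    simp only [mp_one, mp_zero, Matrix.fromBlocks_transpose, Matrix.fromBlocks_multiply,
      Matrix.transpose_one, Matrix.transpose_zero, Matrix.one_mul, Matrix.mul_one,
      Matrix.zero_mul, Matrix.mul_zero, add_zero, zero_add, hPE]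

lemma Cong.block1 {ι κ : Type*} [Fintype ι] [DecidableEq ι] [Fintype κ] [DecidableEq κ]
    {B B' : Matrix ι ι R4} (C : Matrix κ κ R4) (h : Cong B B') :
    Cong (fromBlocks B 0 0 C) (fromBlocks B' 0 0 C) := by
  obtain ⟨P, hdet, hPE⟩ := h
  refine ⟨fromBlocks P 0 0 1, ?_, ?_⟩
  · rw [Matrix.det_fromBlocks_zero₂₁, Matrix.det_one, mul_one]; exact hdet
  · rw [mp_fromBlocks]
    simp only [mp_one, mp_zero, Matrix.fromBlocks_transpose, Matrix.fromBlocks_multiply,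
      Matrix.transpose_one, Matrix.transpose_zero, Matrix.one_mul, Matrix.mul_one,
      Matrix.zero_mul, Matrix.mul_zero, add_zero, zero_add, hPE]

lemma twoByTwo {α γ β : R4} (hα : α = 0 ∨ α = 2) (hγ : γ = 0 ∨ γ = 2) (hβ : β = 1 ∨ β = 3) :
    Cong !![α,β;β,γ] !![2,1;1,2] ∨ Cong !![α,β;β,γ] !![0,1;1,0] := by
  rcases hα with rfl | rfl <;> rcases hγ with rfl | rfl <;> rcases hβ with rfl | rfl
  · exact Or.inr ⟨1, Or.inl (by simp), by decide⟩
  · exact Or.inr ⟨!![1,0;0,-1], Or.inr (by norm_num [Matrix.det_fin_two_of]), by decide⟩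
  · exact Or.inr ⟨!![1,1;0,1], Or.inl (by norm_num [Matrix.det_fin_two_of]), by decide⟩
  · exact Or.inr ⟨!![1,1;0,-1], Or.inr (by norm_num [Matrix.det_fin_two_of]), by decide⟩
  · exact Or.inr ⟨!![0,1;1,1], Or.inr (by norm_num [Matrix.det_fin_two_of]), by decide⟩
  · exact Or.inr ⟨!![0,1;-1,-1], Or.inl (by norm_num [Matrix.det_fin_two_of]), by decide⟩
  · exact Or.inl ⟨1, Or.inl (by simp), by decide⟩
  · exact Or.inl ⟨!![1,0;0,-1], Or.inr (by norm_num [Matrix.det_fin_two_of]), by decide⟩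

/-- the same normal form, directly over `ZMod 4` -/
def nfR (r s t p : ℕ) (i j : ℕ) : R4 :=
  if i < 2*r ∧ j < 2*r then (if i = j then 2 else if i / 2 = j / 2 then 1 else 0)
  else if 2*r ≤ i ∧ i < 2*r+2*s ∧ 2*r ≤ j ∧ j < 2*r+2*s then
    (if i ≠ j ∧ i / 2 = j / 2 then 1 else 0)
  else if 2*r+2*s ≤ i ∧ i < 2*r+2*s+2*t ∧ 2*r+2*s ≤ j ∧ j < 2*r+2*s+2*t then
    (if i ≠ j ∧ i / 2 = j / 2 then 2 else 0)
  else if 2*r+2*s+2*t ≤ i ∧ i < 2*r+2*s+2*t+p ∧ i = j then 2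
  else 0

lemma nfR_cast (r s t p i j : ℕ) : ((nfEntry r s t p i j : ℤ) : R4) = nfR r s t p i j := by
  unfold nfEntry nfR
  split_ifs <;> norm_num

lemma nfR_z {r s t p a b : ℕ} (h1 : ¬(a < 2*r ∧ b < 2*r))
    (h2 : ¬(2*r ≤ a ∧ a < 2*r+2*s ∧ 2*r ≤ b ∧ b < 2*r+2*s))
    (h3 : ¬(2*r+2*s ≤ a ∧ a < 2*r+2*s+2*t ∧ 2*r+2*s ≤ b ∧ b < 2*r+2*s+2*t))
    (h4 : ¬(2*r+2*s+2*t ≤ a ∧ a < 2*r+2*s+2*t+p ∧ a = b)) :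
    nfR r s t p a b = 0 := by
  unfold nfR; rw [if_neg h1, if_neg h2, if_neg h3, if_neg h4]

lemma nfR_rr {r s t p a b : ℕ} (ha : a < 2*r) (hb : b < 2*r) :
    nfR r s t p a b = if a = b then 2 else if a / 2 = b / 2 then 1 else 0 := by
  unfold nfR; rw [if_pos ⟨ha, hb⟩]

lemma nfR_ss {r s t p a b : ℕ} (ha : 2*r ≤ a) (ha' : a < 2*r+2*s) (hb : 2*r ≤ b)
    (hb' : b < 2*r+2*s) : nfR r s t p a b = if a ≠ b ∧ a / 2 = b / 2 then 1 else 0 := by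
  unfold nfR; rw [if_neg (by omega), if_pos ⟨ha, ha', hb, hb'⟩]

lemma nfR_tt {r s t p a b : ℕ} (ha : 2*r+2*s ≤ a) (ha' : a < 2*r+2*s+2*t) (hb : 2*r+2*s ≤ b)
    (hb' : b < 2*r+2*s+2*t) : nfR r s t p a b = if a ≠ b ∧ a / 2 = b / 2 then 2 else 0 := by
  unfold nfR; rw [if_neg (by omega), if_neg (by omega), if_pos ⟨ha, ha', hb, hb'⟩]

lemma nfR_pp {r s t p a b : ℕ} (ha : 2*r+2*s+2*t ≤ a) (ha' : a < 2*r+2*s+2*t+p) (hab : a = b) :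
    nfR r s t p a b = 2 := by
  unfold nfR
  rw [if_neg (by omega), if_neg (by omega), if_neg (by omega), if_pos ⟨ha, ha', hab⟩]

lemma nfR_lowR {r s t p s' t' p' a b : ℕ} (ha : a < 2*r) (hb : b < 2*r) :
    nfR r s t p a b = nfR r s' t' p' a b := by
  rw [nfR_rr ha hb, nfR_rr ha hb]

lemma nfR_lowS {r s t p t' p' a b : ℕ} (ha : a < 2*r+2*s) (hb : b < 2*r+2*s) :
    nfR r s t p a b = nfR r s t' p' a b := by
  rcases lt_or_ge a (2*r) with h1 | h1 <;> rcases lt_or_ge b (2*r) with h2 | h2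
  · rw [nfR_rr h1 h2, nfR_rr h1 h2]
  · rw [nfR_z (by omega) (by omega) (by omega) (by omega),
      nfR_z (by omega) (by omega) (by omega) (by omega)]
  · rw [nfR_z (by omega) (by omega) (by omega) (by omega),
      nfR_z (by omega) (by omega) (by omega) (by omega)]
  · rw [nfR_ss h1 ha h2 hb, nfR_ss h1 ha h2 hb]

lemma nfR_lowT {r s t p p' a b : ℕ} (ha : a < 2*r+2*s+2*t) (hb : b < 2*r+2*s+2*t) :
    nfR r s t p a b = nfR r s t p' a b := by
  rcases lt_or_ge a (2*r+2*s) with h1 | h1 <;> rcases lt_or_ge b (2*r+2*s) with h2 | h2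
  · rw [nfR_lowS h1 h2 (t' := t) (p' := p'), nfR_lowS h1 h2 (t' := t) (p' := p)]
  · rw [nfR_z (by omega) (by omega) (by omega) (by omega),
      nfR_z (by omega) (by omega) (by omega) (by omega)]
  · rw [nfR_z (by omega) (by omega) (by omega) (by omega),
      nfR_z (by omega) (by omega) (by omega) (by omega)]
  · rw [nfR_tt h1 ha h2 hb, nfR_tt h1 ha h2 hb]

lemma nfR_shiftS {r s t p a b : ℕ} (ha : 2*r ≤ a) (hb : 2*r ≤ b) :
    nfR r (s+1) t p (a+2) (b+2) = nfR r s t p a b := by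
  rcases lt_or_ge a (2*r+2*s) with h1 | h1 <;> rcases lt_or_ge b (2*r+2*s) with h2 | h2
  · rw [nfR_ss (by omega) (by omega) (by omega) (by omega), nfR_ss ha h1 hb h2]
    simp only [show (¬a+2 = b+2 ∧ (a+2)/2 = (b+2)/2) ↔ (¬a = b ∧ a/2 = b/2) by omega]
  · rcases lt_or_ge b (2*r+2*s+2*t) with h3 | h3 <;>
      rcases lt_or_ge a (2*r) with h4 | h4 <;>
      rw [nfR_z (by omega) (by omega) (by omega) (by omega),
        nfR_z (by omega) (by omega) (by omega) (by omega)]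
  · rcases lt_or_ge a (2*r+2*s+2*t) with h3 | h3 <;>
      rw [nfR_z (by omega) (by omega) (by omega) (by omega),
        nfR_z (by omega) (by omega) (by omega) (by omega)]
  · -- both ≥ 2r+2s : T / P / M regions
    rcases lt_or_ge a (2*r+2*s+2*t) with h3 | h3 <;> rcases lt_or_ge b (2*r+2*s+2*t) with h4 | h4
    · rw [nfR_tt (by omega) (by omega) (by omega) (by omega), nfR_tt h1 h3 h2 h4]
      simp only [show (¬a+2 = b+2 ∧ (a+2)/2 = (b+2)/2) ↔ (¬a = b ∧ a/2 = b/2) by omega]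
    · rw [nfR_z (by omega) (by omega) (by omega) (by omega),
        nfR_z (by omega) (by omega) (by omega) (by omega)]
    · rw [nfR_z (by omega) (by omega) (by omega) (by omega),
        nfR_z (by omega) (by omega) (by omega) (by omega)]
    · by_cases hab : a = b
      · rcases lt_or_ge a (2*r+2*s+2*t+p) with h5 | h5
        · rw [nfR_pp (by omega) (by omega) (by omega), nfR_pp h3 h5 hab]
        · rw [nfR_z (by omega) (by omega) (by omega) (by omega),
            nfR_z (by omega) (by omega) (by omega) (by omega)]
      · rw [nfR_z (by omega) (by omega) (by omega) (by omega),
          nfR_z (by omega) (by omega) (by omega) (by omega)]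

lemma nfR_shiftE {r s t p : ℕ} (a b : ℕ) :
    nfR (r+1) s t p (a+2) (b+2) = nfR r s t p a b := by
  unfold nfR
  simp only [show (a+2 < 2*(r+1) ∧ b+2 < 2*(r+1)) ↔ (a < 2*r ∧ b < 2*r) by omega,
    show (a+2 = b+2) ↔ (a = b) by omega,
    show (a+2 ≠ b+2) ↔ (a ≠ b) by omega,
    show ((a+2)/2 = (b+2)/2) ↔ (a/2 = b/2) by omega,
    show (2*(r+1) ≤ a+2 ∧ a+2 < 2*(r+1)+2*s ∧ 2*(r+1) ≤ b+2 ∧ b+2 < 2*(r+1)+2*s) ↔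
      (2*r ≤ a ∧ a < 2*r+2*s ∧ 2*r ≤ b ∧ b < 2*r+2*s) by omega,
    show (2*(r+1)+2*s ≤ a+2 ∧ a+2 < 2*(r+1)+2*s+2*t ∧ 2*(r+1)+2*s ≤ b+2 ∧ b+2 < 2*(r+1)+2*s+2*t) ↔
      (2*r+2*s ≤ a ∧ a < 2*r+2*s+2*t ∧ 2*r+2*s ≤ b ∧ b < 2*r+2*s+2*t) by omega,
    show (2*(r+1)+2*s+2*t ≤ a+2 ∧ a+2 < 2*(r+1)+2*s+2*t+p ∧ a = b) ↔
      (2*r+2*s+2*t ≤ a ∧ a < 2*r+2*s+2*t+p ∧ a = b) by omega,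
    show (2*(r+1)+2*s+2*t ≤ a+2 ∧ a+2 < 2*(r+1)+2*s+2*t+p ∧ a+2 = b+2) ↔
      (2*r+2*s+2*t ≤ a ∧ a < 2*r+2*s+2*t+p ∧ a = b) by omega]

lemma nfR_shiftT {r s t p a b : ℕ} (ha : 2*r+2*s ≤ a) (hb : 2*r+2*s ≤ b) :
    nfR r s (t+1) p (a+2) (b+2) = nfR r s t p a b := by
  unfold nfR
  simp only [show (a+2 < 2*r ∧ b+2 < 2*r) ↔ (a < 2*r ∧ b < 2*r) by omega,
    show (a+2 = b+2) ↔ (a = b) by omega,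
    show (a+2 ≠ b+2) ↔ (a ≠ b) by omega,
    show ((a+2)/2 = (b+2)/2) ↔ (a/2 = b/2) by omega,
    show (2*r ≤ a+2 ∧ a+2 < 2*r+2*s ∧ 2*r ≤ b+2 ∧ b+2 < 2*r+2*s) ↔
      (2*r ≤ a ∧ a < 2*r+2*s ∧ 2*r ≤ b ∧ b < 2*r+2*s) by omega,
    show (2*r+2*s ≤ a+2 ∧ a+2 < 2*r+2*s+2*(t+1) ∧ 2*r+2*s ≤ b+2 ∧ b+2 < 2*r+2*s+2*(t+1)) ↔
      (2*r+2*s ≤ a ∧ a < 2*r+2*s+2*t ∧ 2*r+2*s ≤ b ∧ b < 2*r+2*s+2*t) by omega,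
    show (2*r+2*s+2*(t+1) ≤ a+2 ∧ a+2 < 2*r+2*s+2*(t+1)+p ∧ a = b) ↔
      (2*r+2*s+2*t ≤ a ∧ a < 2*r+2*s+2*t+p ∧ a = b) by omega,
    show (2*r+2*s+2*(t+1) ≤ a+2 ∧ a+2 < 2*r+2*s+2*(t+1)+p ∧ a+2 = b+2) ↔
      (2*r+2*s+2*t ≤ a ∧ a < 2*r+2*s+2*t+p ∧ a = b) by omega]

lemma nfR_shiftP {r s t p a b : ℕ} (ha : 2*r+2*s+2*t ≤ a) (hb : 2*r+2*s+2*t ≤ b) :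
    nfR r s t (p+1) (a+1) (b+1) = nfR r s t p a b := by
  by_cases hab : a = b
  · rcases lt_or_ge a (2*r+2*s+2*t+p) with h5 | h5
    · rw [nfR_pp (by omega) (by omega) (by omega), nfR_pp ha h5 hab]
    · rw [nfR_z (by omega) (by omega) (by omega) (by omega),
        nfR_z (by omega) (by omega) (by omega) (by omega)]
  · rw [nfR_z (by omega) (by omega) (by omega) (by omega),
      nfR_z (by omega) (by omega) (by omega) (by omega)]

def rotf (o bs a : ℕ) : ℕ := if a < o then a + bs else if a < o + bs then a - o else a

lemma rotf_lo {o bs a : ℕ} (h : a < o) : rotf o bs a = a + bs := by unfold rotf; split_ifs <;> omega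

lemma rotf_mid {o bs a : ℕ} (h : o ≤ a) (h' : a < o + bs) : rotf o bs a = a - o := by
  unfold rotf; split_ifs <;> omega

lemma rotf_hi {o bs a : ℕ} (h : o + bs ≤ a) : rotf o bs a = a := by
  unfold rotf; split_ifs <;> omega

lemma key_E (r s t p : ℕ) (a b : ℕ) :
    nfR (r+1) s t p a b =
      (if rotf 0 2 a < 2 ∧ rotf 0 2 b < 2 then
        (if rotf 0 2 a = rotf 0 2 b then (2:R4) else 1)
      else if 2 ≤ rotf 0 2 a ∧ 2 ≤ rotf 0 2 b then
        nfR r s t p (rotf 0 2 a - 2) (rotf 0 2 b - 2)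
      else 0) := by
  rcases (show a < 2 ∨ 2 ≤ a by omega) with ha | ha <;>
    rcases (show b < 2 ∨ 2 ≤ b by omega) with hb | hb
  · rw [rotf_mid (by omega) (by omega), rotf_mid (by omega) (by omega)]
    rw [if_pos (by omega)]
    rw [nfR_rr (by omega) (by omega)]
    rcases (show a = b ∨ a ≠ b by omega) with hab | hab
    · rw [if_pos hab, if_pos (show a - 0 = b - 0 by omega)]
    · rw [if_neg hab, if_pos (show a/2 = b/2 by omega), if_neg (show ¬(a - 0 = b - 0) by omega)]
  · rw [rotf_mid (by omega) (by omega), rotf_hi (by omega)]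
    rw [if_neg (by omega), if_neg (by omega)]
    rcases (show b < 2*(r+1) ∨ 2*(r+1) ≤ b by omega) with h | h
    · rw [nfR_rr (by omega) (by omega), if_neg (by omega), if_neg (by omega)]
    · exact nfR_z (by omega) (by omega) (by omega) (by omega)
  · rw [rotf_hi (by omega), rotf_mid (by omega) (by omega)]
    rw [if_neg (by omega), if_neg (by omega)]
    rcases (show a < 2*(r+1) ∨ 2*(r+1) ≤ a by omega) with h | h
    · rw [nfR_rr (by omega) (by omega), if_neg (by omega), if_neg (by omega)]
    · exact nfR_z (by omega) (by omega) (by omega) (by omega)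
  · rw [rotf_hi (by omega), rotf_hi (by omega)]
    rw [if_neg (by omega), if_pos (by omega)]
    have h := nfR_shiftE (r := r) (s := s) (t := t) (p := p) (a - 2) (b - 2)
    rw [show a - 2 + 2 = a by omega, show b - 2 + 2 = b by omega] at h
    exact h

lemma key_H (r s t p : ℕ) (a b : ℕ) :
    nfR r (s+1) t p a b =
      (if rotf (2*r) 2 a < 2 ∧ rotf (2*r) 2 b < 2 then
        (if rotf (2*r) 2 a = rotf (2*r) 2 b then (0:R4) else 1)
      else if 2 ≤ rotf (2*r) 2 a ∧ 2 ≤ rotf (2*r) 2 b then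
        nfR r s t p (rotf (2*r) 2 a - 2) (rotf (2*r) 2 b - 2)
      else 0) := by
  rcases (show a < 2*r ∨ (2*r ≤ a ∧ a < 2*r+2) ∨ 2*r+2 ≤ a by omega) with ha | ⟨ha, ha'⟩ | ha <;>
    rcases (show b < 2*r ∨ (2*r ≤ b ∧ b < 2*r+2) ∨ 2*r+2 ≤ b by omega) with hb | ⟨hb, hb'⟩ | hb
  · -- lo lo
    rw [rotf_lo ha, rotf_lo hb, if_neg (by omega), if_pos (by omega),
      show a + 2 - 2 = a by omega, show b + 2 - 2 = b by omega]
    exact nfR_lowR ha hb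
  · -- lo mid
    rw [rotf_lo ha, rotf_mid hb hb', if_neg (by omega), if_neg (by omega)]
    exact nfR_z (by omega) (by omega) (by omega) (by omega)
  · -- lo hi
    rw [rotf_lo ha, rotf_hi hb, if_neg (by omega), if_pos (by omega)]
    rw [nfR_z (by omega) (by omega) (by omega) (by omega),
      nfR_z (by omega) (by omega) (by omega) (by omega)]
  · -- mid lo
    rw [rotf_mid ha ha', rotf_lo hb, if_neg (by omega), if_neg (by omega)]
    exact nfR_z (by omega) (by omega) (by omega) (by omega)
  · -- mid mid
    rw [rotf_mid ha ha', rotf_mid hb hb', if_pos (by omega)]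
    rw [nfR_ss (by omega) (by omega) (by omega) (by omega)]
    rcases (show a = b ∨ a ≠ b by omega) with hab | hab
    · rw [if_neg (by simp [hab]), if_pos (by omega)]
    · rw [if_pos ⟨hab, by omega⟩, if_neg (by omega)]
  · -- mid hi
    rw [rotf_mid ha ha', rotf_hi hb, if_neg (by omega), if_neg (by omega)]
    rcases (show b < 2*r+2*(s+1) ∨ 2*r+2*(s+1) ≤ b by omega) with h | h
    · rw [nfR_ss (by omega) (by omega) (by omega) (by omega), if_neg (by omega)]
    · exact nfR_z (by omega) (by omega) (by omega) (by omega)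
  · -- hi lo
    rw [rotf_hi ha, rotf_lo hb, if_neg (by omega), if_pos (by omega)]
    rw [nfR_z (by omega) (by omega) (by omega) (by omega),
      nfR_z (by omega) (by omega) (by omega) (by omega)]
  · -- hi mid
    rw [rotf_hi ha, rotf_mid hb hb', if_neg (by omega), if_neg (by omega)]
    rcases (show a < 2*r+2*(s+1) ∨ 2*r+2*(s+1) ≤ a by omega) with h | h
    · rw [nfR_ss (by omega) (by omega) (by omega) (by omega), if_neg (by omega)]
    · exact nfR_z (by omega) (by omega) (by omega) (by omega)
  · -- hi hi
    rw [rotf_hi ha, rotf_hi hb, if_neg (by omega), if_pos (by omega)]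
    have h := nfR_shiftS (r := r) (s := s) (t := t) (p := p) (a := a - 2) (b := b - 2)
      (by omega) (by omega)
    rw [show a - 2 + 2 = a by omega, show b - 2 + 2 = b by omega] at h
    exact h

lemma key_T (r s t p : ℕ) (a b : ℕ) :
    nfR r s (t+1) p a b =
      (if rotf (2*r+2*s) 2 a < 2 ∧ rotf (2*r+2*s) 2 b < 2 then
        (if rotf (2*r+2*s) 2 a = rotf (2*r+2*s) 2 b then (0:R4) else 2)
      else if 2 ≤ rotf (2*r+2*s) 2 a ∧ 2 ≤ rotf (2*r+2*s) 2 b then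
        nfR r s t p (rotf (2*r+2*s) 2 a - 2) (rotf (2*r+2*s) 2 b - 2)
      else 0) := by
  set o := 2*r+2*s with ho
  rcases (show a < o ∨ (o ≤ a ∧ a < o+2) ∨ o+2 ≤ a by omega) with ha | ⟨ha, ha'⟩ | ha <;>
    rcases (show b < o ∨ (o ≤ b ∧ b < o+2) ∨ o+2 ≤ b by omega) with hb | ⟨hb, hb'⟩ | hb
  · rw [rotf_lo ha, rotf_lo hb, if_neg (by omega), if_pos (by omega),
      show a + 2 - 2 = a by omega, show b + 2 - 2 = b by omega]
    exact nfR_lowS (by omega) (by omega)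
  · rw [rotf_lo ha, rotf_mid hb hb', if_neg (by omega), if_neg (by omega)]
    exact nfR_z (by omega) (by omega) (by omega) (by omega)
  · rw [rotf_lo ha, rotf_hi hb, if_neg (by omega), if_pos (by omega)]
    rw [nfR_z (by omega) (by omega) (by omega) (by omega),
      nfR_z (by omega) (by omega) (by omega) (by omega)]
  · rw [rotf_mid ha ha', rotf_lo hb, if_neg (by omega), if_neg (by omega)]
    exact nfR_z (by omega) (by omega) (by omega) (by omega)
  · rw [rotf_mid ha ha', rotf_mid hb hb', if_pos (by omega)]
    rw [nfR_tt (by omega) (by omega) (by omega) (by omega)]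
    rcases (show a = b ∨ a ≠ b by omega) with hab | hab
    · rw [if_neg (by simp [hab]), if_pos (by omega)]
    · rw [if_pos ⟨hab, by omega⟩, if_neg (by omega)]
  · rw [rotf_mid ha ha', rotf_hi hb, if_neg (by omega), if_neg (by omega)]
    rcases (show b < o+2*(t+1) ∨ o+2*(t+1) ≤ b by omega) with h | h
    · rw [nfR_tt (by omega) (by omega) (by omega) (by omega), if_neg (by omega)]
    · exact nfR_z (by omega) (by omega) (by omega) (by omega)
  · rw [rotf_hi ha, rotf_lo hb, if_neg (by omega), if_pos (by omega)]
    rw [nfR_z (by omega) (by omega) (by omega) (by omega),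
      nfR_z (by omega) (by omega) (by omega) (by omega)]
  · rw [rotf_hi ha, rotf_mid hb hb', if_neg (by omega), if_neg (by omega)]
    rcases (show a < o+2*(t+1) ∨ o+2*(t+1) ≤ a by omega) with h | h
    · rw [nfR_tt (by omega) (by omega) (by omega) (by omega), if_neg (by omega)]
    · exact nfR_z (by omega) (by omega) (by omega) (by omega)
  · rw [rotf_hi ha, rotf_hi hb, if_neg (by omega), if_pos (by omega)]
    have h := nfR_shiftT (r := r) (s := s) (t := t) (p := p) (a := a - 2) (b := b - 2)
      (by omega) (by omega)
    rw [show a - 2 + 2 = a by omega, show b - 2 + 2 = b by omega] at h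
    exact h

lemma key_P (r s t p : ℕ) (a b : ℕ) :
    nfR r s t (p+1) a b =
      (if rotf (2*r+2*s+2*t) 1 a < 1 ∧ rotf (2*r+2*s+2*t) 1 b < 1 then (2:R4)
      else if 1 ≤ rotf (2*r+2*s+2*t) 1 a ∧ 1 ≤ rotf (2*r+2*s+2*t) 1 b then
        nfR r s t p (rotf (2*r+2*s+2*t) 1 a - 1) (rotf (2*r+2*s+2*t) 1 b - 1)
      else 0) := by
  set o := 2*r+2*s+2*t with ho
  rcases (show a < o ∨ a = o ∨ o+1 ≤ a by omega) with ha | ha | ha <;>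
    rcases (show b < o ∨ b = o ∨ o+1 ≤ b by omega) with hb | hb | hb
  · rw [rotf_lo ha, rotf_lo hb, if_neg (by omega), if_pos (by omega),
      show a + 1 - 1 = a by omega, show b + 1 - 1 = b by omega]
    exact nfR_lowT (by omega) (by omega)
  · rw [rotf_lo ha, rotf_mid (by omega) (by omega), if_neg (by omega), if_neg (by omega)]
    exact nfR_z (by omega) (by omega) (by omega) (by omega)
  · rw [rotf_lo ha, rotf_hi (by omega), if_neg (by omega), if_pos (by omega)]
    rw [nfR_z (by omega) (by omega) (by omega) (by omega),
      nfR_z (by omega) (by omega) (by omega) (by omega)]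
  · rw [rotf_mid (by omega) (by omega), rotf_lo hb, if_neg (by omega), if_neg (by omega)]
    exact nfR_z (by omega) (by omega) (by omega) (by omega)
  · rw [rotf_mid (by omega) (by omega), rotf_mid (by omega) (by omega), if_pos (by omega)]
    exact nfR_pp (by omega) (by omega) (by omega)
  · rw [rotf_mid (by omega) (by omega), rotf_hi (by omega), if_neg (by omega), if_neg (by omega)]
    exact nfR_z (by omega) (by omega) (by omega) (by omega)
  · rw [rotf_hi (by omega), rotf_lo hb, if_neg (by omega), if_pos (by omega)]
    rw [nfR_z (by omega) (by omega) (by omega) (by omega),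
      nfR_z (by omega) (by omega) (by omega) (by omega)]
  · rw [rotf_hi (by omega), rotf_mid (by omega) (by omega), if_neg (by omega), if_neg (by omega)]
    exact nfR_z (by omega) (by omega) (by omega) (by omega)
  · rw [rotf_hi (by omega), rotf_hi (by omega), if_neg (by omega), if_pos (by omega)]
    have h := nfR_shiftP (r := r) (s := s) (t := t) (p := p) (a := a - 1) (b := b - 1)
      (by omega) (by omega)
    rw [show a - 1 + 1 = a by omega, show b - 1 + 1 = b by omega] at h
    exact h

def rotg (o bs a : ℕ) : ℕ := if a < bs then a + o else if a < o + bs then a - bs else a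

def nfMat (n r s t p : ℕ) : Matrix (Fin n) (Fin n) R4 :=
  Matrix.of fun i j => nfR r s t p (i : ℕ) (j : ℕ)

def rotPerm (n o bs : ℕ) (h : o + bs ≤ n) : Equiv.Perm (Fin n) where
  toFun i := ⟨rotf o bs i, by have := i.isLt; unfold rotf; split_ifs <;> omega⟩
  invFun i := ⟨rotg o bs i, by have := i.isLt; unfold rotg; split_ifs <;> omega⟩
  left_inv i := by
    apply Fin.ext; simp only [rotf, rotg]; have := i.isLt; split_ifs <;> omega
  right_inv i := by
    apply Fin.ext; simp only [rotf, rotg]; have := i.isLt; split_ifs <;> omega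

lemma rotPerm_coe {n o bs : ℕ} (h : o + bs ≤ n) (i : Fin n) :
    ((rotPerm n o bs h i : Fin n) : ℕ) = rotf o bs i := by rfl

lemma fse_symm {b k : ℕ} (x : Fin (b+k)) :
    (finSumFinEquiv.symm x : Fin b ⊕ Fin k) =
      if h : (x:ℕ) < b then Sum.inl ⟨x, h⟩ else Sum.inr ⟨(x:ℕ) - b, by omega⟩ := by
  rw [Equiv.symm_apply_eq]
  split_ifs with h
  · apply Fin.ext; simp [finSumFinEquiv_apply_left]
  · apply Fin.ext; simp [finSumFinEquiv_apply_right]; omega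

lemma assemble {bs k : ℕ} (A : Matrix (Fin (bs+k)) (Fin (bs+k)) R4)
    (blk : Matrix (Fin bs) (Fin bs) R4) (bf : ℕ → ℕ → R4)
    (hbf : ∀ x y : Fin bs, blk x y = bf (x:ℕ) (y:ℕ))
    (r' s' t' p' r s t p o : ℕ) (ho : o + bs ≤ bs + k)
    (hC : Cong A ((fromBlocks blk 0 0 (nfMat k r' s' t' p')).submatrix
        (finSumFinEquiv.symm) (finSumFinEquiv.symm)))
    (hkey : ∀ a b : ℕ,
      nfR r s t p a b =
      if rotf o bs a < bs ∧ rotf o bs b < bs then bf (rotf o bs a) (rotf o bs b)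
      else if bs ≤ rotf o bs a ∧ bs ≤ rotf o bs b then
        nfR r' s' t' p' (rotf o bs a - bs) (rotf o bs b - bs)
      else 0) :
    Cong A (nfMat (bs+k) r s t p) := by
  refine hC.trans ?_
  have h2 := Cong.perm ((fromBlocks blk 0 0 (nfMat k r' s' t' p')).submatrix
      (finSumFinEquiv.symm) (finSumFinEquiv.symm)) (rotPerm (bs+k) o bs ho)
  have h3 : (((fromBlocks blk 0 0 (nfMat k r' s' t' p')).submatrix
      (finSumFinEquiv.symm) (finSumFinEquiv.symm)).submatrix (rotPerm (bs+k) o bs ho)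
      (rotPerm (bs+k) o bs ho)) = nfMat (bs+k) r s t p := by
    ext i j
    simp only [Matrix.submatrix_apply, fse_symm, rotPerm_coe, nfMat, Matrix.of_apply]
    rw [hkey (i:ℕ) (j:ℕ)]
    split_ifs <;>
      first
        | (exfalso; omega)
        | simp_all [Matrix.fromBlocks_apply₁₁, Matrix.fromBlocks_apply₁₂,
            Matrix.fromBlocks_apply₂₁, Matrix.fromBlocks_apply₂₂, hbf, nfMat]
  rw [h3] at h2
  exact h2

lemma Cong.ev {ι : Type*} [Fintype ι] [DecidableEq ι] {A B : Matrix ι ι R4}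
    (h : Cong A B) (hsym : A.IsSymm) (hev : ∀ i, Ev (A i i)) : ∀ i, Ev (B i i) := by
  obtain ⟨P, _, rfl⟩ := h
  exact conj_even A (mp P) hsym hev

lemma mp_lift {ι κ : Type*} (M : Matrix ι κ R4) :
    mp (M.map fun z : R4 => ((z.val : ℕ) : ℤ)) = M := by
  ext i j
  simp [mp, Matrix.map_apply, ZMod.natCast_val, ZMod.cast_id]

lemma exists_perm_two {n : ℕ} (i j c0 c1 : Fin n) (hij : i ≠ j) (h01 : c0 ≠ c1) :
    ∃ σ : Equiv.Perm (Fin n), σ c0 = i ∧ σ c1 = j := by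
  have h1 : Equiv.swap c0 i j ≠ c0 := by
    intro h
    have h2 := congrArg (Equiv.swap c0 i) h
    rw [Equiv.swap_apply_self, Equiv.swap_apply_left] at h2
    exact hij h2.symm
  refine ⟨(Equiv.swap c1 (Equiv.swap c0 i j)).trans (Equiv.swap c0 i), ?_, ?_⟩
  · simp only [Equiv.trans_apply]
    rw [Equiv.swap_apply_of_ne_of_ne h01 (Ne.symm h1), Equiv.swap_apply_left]
  · simp only [Equiv.trans_apply]
    rw [Equiv.swap_apply_left, Equiv.swap_apply_self]

lemma reduceStep {bs k : ℕ} (A : Matrix (Fin (bs+k)) (Fin (bs+k)) R4) (hsym : A.IsSymm)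
    (hev : ∀ i, Ev (A i i)) (σ : Equiv.Perm (Fin (bs+k)))
    (Z : Matrix (Fin bs) (Fin k) ℤ)
    (hZ : ((A.submatrix σ σ).submatrix finSumFinEquiv finSumFinEquiv).toBlocks₁₁ * mp Z
        = -((A.submatrix σ σ).submatrix finSumFinEquiv finSumFinEquiv).toBlocks₁₂) :
    ∃ C : Matrix (Fin k) (Fin k) R4, C.IsSymm ∧ (∀ i, Ev (C i i)) ∧
      Cong A ((fromBlocks ((A.submatrix σ σ).submatrix finSumFinEquiv finSumFinEquiv).toBlocks₁₁
        0 0 C).submatrix (finSumFinEquiv.symm) (finSumFinEquiv.symm)) := by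
  set S := (A.submatrix σ σ).submatrix finSumFinEquiv finSumFinEquiv with hSdef
  have hS : S.IsSymm := (hsym.submatrix σ).submatrix finSumFinEquiv
  have h2 := Cong.split S hS Z hZ
  have h3 := h2.submatrix (finSumFinEquiv.symm)
  have hid : S.submatrix (finSumFinEquiv.symm) (finSumFinEquiv.symm) = A.submatrix σ σ := by
    rw [hSdef, Matrix.submatrix_submatrix]
    simp [Equiv.self_comp_symm]
  rw [hid] at h3
  have h4 := (Cong.perm A σ).trans h3
  set C := S.toBlocks₂₁ * mp Z + S.toBlocks₂₂ with hCdef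
  set F := (fromBlocks S.toBlocks₁₁ 0 0 C).submatrix
      (finSumFinEquiv.symm : Fin (bs+k) ≃ Fin bs ⊕ Fin k) (finSumFinEquiv.symm) with hFdef
  have hFsym : F.IsSymm := h4.isSymm hsym
  have hFev : ∀ i, Ev (F i i) := h4.ev hsym hev
  have hN : ∀ a b : Fin bs ⊕ Fin k, (fromBlocks S.toBlocks₁₁ 0 0 C) a b =
      F (finSumFinEquiv a) (finSumFinEquiv b) := by
    intro a b
    rw [hFdef, Matrix.submatrix_apply, Equiv.symm_apply_apply, Equiv.symm_apply_apply]
  refine ⟨C, ?_, ?_, h4⟩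
  · apply Matrix.IsSymm.ext
    intro i j
    have e1 : C j i = (fromBlocks S.toBlocks₁₁ 0 0 C) (Sum.inr j) (Sum.inr i) := rfl
    have e2 : C i j = (fromBlocks S.toBlocks₁₁ 0 0 C) (Sum.inr i) (Sum.inr j) := rfl
    rw [e1, e2, hN, hN]
    exact hFsym.apply _ _
  · intro i
    have e2 : C i i = (fromBlocks S.toBlocks₁₁ 0 0 C) (Sum.inr i) (Sum.inr i) := rfl
    rw [e2, hN]
    exact hFev _

lemma ev_of_not_odd : ∀ x : R4, ¬(x = 1 ∨ x = 3) → Ev x := by unfold Ev; decide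

lemma ev_zero_of_ne_two : ∀ x : R4, Ev x → x ≠ 2 → x = 0 := by unfold Ev; decide

lemma det_val : ∀ α γ β : R4, Ev α → Ev γ → (β = 1 ∨ β = 3) → α * γ - β * β = 3 := by
  unfold Ev; decide

lemma isUnit_three : IsUnit (3 : R4) := by
  refine ⟨⟨3, 3, by decide, by decide⟩, rfl⟩


lemma mainNF : ∀ n (A : Matrix (Fin n) (Fin n) R4), A.IsSymm → (∀ i, Ev (A i i)) →
    ∃ r s t p m, n = 2*r+2*s+2*t+p+m ∧ Cong A (nfMat n r s t p) := by
  intro n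
  induction n using Nat.strong_induction_on with
  | _ n IH =>
  intro A hsym hev
  by_cases hcaseA : ∃ i j : Fin n, i ≠ j ∧ (A i j = 1 ∨ A i j = 3)
  · -- case (a): an odd off-diagonal entry
    obtain ⟨i0, j0, hij, hodd⟩ := hcaseA
    obtain ⟨k, rfl⟩ : ∃ k, n = 2 + k := by
      refine ⟨n - 2, ?_⟩
      have h1 := i0.isLt
      have h2 := j0.isLt
      have h3 : (i0:ℕ) ≠ (j0:ℕ) := fun h => hij (Fin.ext h)
      omega
    set c0 : Fin (2+k) := ⟨0, by omega⟩ with hc0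
    set c1 : Fin (2+k) := ⟨1, by omega⟩ with hc1
    obtain ⟨σ, hσ0, hσ1⟩ := exists_perm_two i0 j0 c0 c1 hij (by simp [hc0, hc1, Fin.ext_iff])
    set S := (A.submatrix σ σ).submatrix finSumFinEquiv finSumFinEquiv with hSdef
    have hfse0 : (finSumFinEquiv (Sum.inl (0 : Fin 2)) : Fin (2+k)) = c0 := by
      apply Fin.ext; simp [hc0]
    have hfse1 : (finSumFinEquiv (Sum.inl (1 : Fin 2)) : Fin (2+k)) = c1 := by
      apply Fin.ext; simp [hc1]
    have hB : S.toBlocks₁₁ = !![A i0 i0, A i0 j0; A i0 j0, A j0 j0] := by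
      rw [Matrix.eta_fin_two (S.toBlocks₁₁)]
      have e : ∀ x y : Fin 2, S.toBlocks₁₁ x y =
          A (σ (finSumFinEquiv (Sum.inl x))) (σ (finSumFinEquiv (Sum.inl y))) := by
        intro x y; rfl
      rw [e, e, e, e, hfse0, hfse1, hσ0, hσ1]
      rw [show A j0 i0 = A i0 j0 from hsym.apply i0 j0]
    have hUnit : IsUnit (S.toBlocks₁₁).det := by
      rw [hB, Matrix.det_fin_two_of, det_val (A i0 i0) (A j0 j0) (A i0 j0)
        (hev i0) (hev j0) hodd]
      exact isUnit_three
    set Z4 := -((S.toBlocks₁₁)⁻¹ * S.toBlocks₁₂) with hZ4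
    set Z := Z4.map (fun z : R4 => ((z.val : ℕ) : ℤ)) with hZdef
    have hZ : S.toBlocks₁₁ * mp Z = -S.toBlocks₁₂ := by
      rw [hZdef, mp_lift, hZ4, Matrix.mul_neg, ← Matrix.mul_assoc,
        Matrix.mul_nonsing_inv _ hUnit, Matrix.one_mul]
    obtain ⟨C, hCsym, hCev, hCong⟩ := reduceStep A hsym hev σ Z hZ
    obtain ⟨r', s', t', p', m', hk, hCnf⟩ := IH k (by omega) C hCsym hCev
    have hCong2 : Cong A ((fromBlocks (S.toBlocks₁₁) 0 0 (nfMat k r' s' t' p')).submatrix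
        (finSumFinEquiv.symm) (finSumFinEquiv.symm)) :=
      hCong.trans ((Cong.block2 _ hCnf).submatrix finSumFinEquiv.symm)
    rcases twoByTwo (hev i0) (hev j0) hodd with hE | hH
    · have hE' : Cong (S.toBlocks₁₁) !![2,1;1,2] := by rw [hB]; exact hE
      have hCong3 : Cong A ((fromBlocks !![(2:R4),1;1,2] 0 0 (nfMat k r' s' t' p')).submatrix
          (finSumFinEquiv.symm) (finSumFinEquiv.symm)) :=
        hCong2.trans ((Cong.block1 _ hE').submatrix finSumFinEquiv.symm)
      refine ⟨r'+1, s', t', p', m', by omega, ?_⟩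
      refine assemble A !![(2:R4),1;1,2] (fun x y => if x = y then 2 else 1) ?_ r' s' t' p'
        (r'+1) s' t' p' 0 (by omega) hCong3 (key_E r' s' t' p')
      intro x y; fin_cases x <;> fin_cases y <;> simp
    · have hH' : Cong (S.toBlocks₁₁) !![0,1;1,0] := by rw [hB]; exact hH
      have hCong3 : Cong A ((fromBlocks !![(0:R4),1;1,0] 0 0 (nfMat k r' s' t' p')).submatrix
          (finSumFinEquiv.symm) (finSumFinEquiv.symm)) :=
        hCong2.trans ((Cong.block1 _ hH').submatrix finSumFinEquiv.symm)
      refine ⟨r', s'+1, t', p', m', by omega, ?_⟩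
      refine assemble A !![(0:R4),1;1,0] (fun x y => if x = y then 0 else 1) ?_ r' s' t' p'
        r' (s'+1) t' p' (2*r') (by omega) hCong3 (key_H r' s' t' p')
      intro x y; fin_cases x <;> fin_cases y <;> simp
  · have hoffEv : ∀ i j : Fin n, A i j = 1 ∨ A i j = 3 → i = j := by
      intro i j h
      by_contra hne
      exact hcaseA ⟨i, j, hne, h⟩
    by_cases hcaseB : ∃ i : Fin n, A i i = 2
    · -- case (b): a diagonal entry 2, all off-diagonal entries even
      obtain ⟨i0, hi0⟩ := hcaseB
      obtain ⟨k, rfl⟩ : ∃ k, n = 1 + k := by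
        refine ⟨n - 1, ?_⟩
        have h1 := i0.isLt
        omega
      set c0 : Fin (1+k) := ⟨0, by omega⟩ with hc0
      set σ := Equiv.swap c0 i0 with hσdef
      have hσ0 : σ c0 = i0 := Equiv.swap_apply_left c0 i0
      set S := (A.submatrix σ σ).submatrix finSumFinEquiv finSumFinEquiv with hSdef
      have hfse0 : (finSumFinEquiv (Sum.inl (0 : Fin 1)) : Fin (1+k)) = c0 := by
        apply Fin.ext; simp [hc0]
      have hB : ∀ x y : Fin 1, S.toBlocks₁₁ x y = 2 := by
        intro x y
        have e : S.toBlocks₁₁ x y =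
            A (σ (finSumFinEquiv (Sum.inl x))) (σ (finSumFinEquiv (Sum.inl y))) := rfl
        rw [e, Subsingleton.elim x 0, Subsingleton.elim y 0, hfse0, hσ0, hi0]
      have hY : ∀ j : Fin k, Ev (S.toBlocks₁₂ 0 j) := by
        intro j
        have e : S.toBlocks₁₂ 0 j =
            A (σ (finSumFinEquiv (Sum.inl 0))) (σ (finSumFinEquiv (Sum.inr j))) := rfl
        rw [e]
        apply ev_of_not_odd
        intro hodd
        have := hoffEv _ _ hodd
        have h2 := σ.injective this
        have h3 : (finSumFinEquiv (Sum.inl (0:Fin 1)) : Fin (1+k)) ≠ finSumFinEquiv (Sum.inr j) := by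
          intro h
          exact absurd (finSumFinEquiv.injective h) (by simp)
        exact h3 h2
      set Z4 : Matrix (Fin 1) (Fin k) R4 :=
        Matrix.of (fun _ j => if S.toBlocks₁₂ 0 j = 2 then 1 else 0) with hZ4
      set Z := Z4.map (fun z : R4 => ((z.val : ℕ) : ℤ)) with hZdef
      have hZ : S.toBlocks₁₁ * mp Z = -S.toBlocks₁₂ := by
        rw [hZdef, mp_lift]
        ext x j
        rw [Subsingleton.elim x 0]
        rw [Matrix.mul_apply, Fin.sum_univ_one, hB 0 0]
        rcases hY j with h | h <;> rw [hZ4] <;> simp only [Matrix.neg_apply, Matrix.of_apply, h]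
        · decide
        · decide
      obtain ⟨C, hCsym, hCev, hCong⟩ := reduceStep A hsym hev σ Z hZ
      obtain ⟨r', s', t', p', m', hk, hCnf⟩ := IH k (by omega) C hCsym hCev
      have hCong2 : Cong A ((fromBlocks (S.toBlocks₁₁) 0 0 (nfMat k r' s' t' p')).submatrix
          (finSumFinEquiv.symm) (finSumFinEquiv.symm)) :=
        hCong.trans ((Cong.block2 _ hCnf).submatrix finSumFinEquiv.symm)
      refine ⟨r', s', t', p'+1, m', by omega, ?_⟩
      refine assemble A (S.toBlocks₁₁) (fun _ _ => 2) ?_ r' s' t' p'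
        r' s' t' (p'+1) (2*r'+2*s'+2*t') (by omega) hCong2 (key_P r' s' t' p')
      intro x y; exact hB x y
    · by_cases hcaseC : ∃ i j : Fin n, i ≠ j ∧ A i j = 2
      · -- case (c): an off-diagonal 2, everything even, diagonal ≡ 0
        obtain ⟨i0, j0, hij, h2v⟩ := hcaseC
        obtain ⟨k, rfl⟩ : ∃ k, n = 2 + k := by
          refine ⟨n - 2, ?_⟩
          have h1 := i0.isLt
          have h2 := j0.isLt
          have h3 : (i0:ℕ) ≠ (j0:ℕ) := fun h => hij (Fin.ext h)
          omega
        set c0 : Fin (2+k) := ⟨0, by omega⟩ with hc0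
        set c1 : Fin (2+k) := ⟨1, by omega⟩ with hc1
        obtain ⟨σ, hσ0, hσ1⟩ := exists_perm_two i0 j0 c0 c1 hij (by simp [hc0, hc1, Fin.ext_iff])
        set S := (A.submatrix σ σ).submatrix finSumFinEquiv finSumFinEquiv with hSdef
        have hfse0 : (finSumFinEquiv (Sum.inl (0 : Fin 2)) : Fin (2+k)) = c0 := by
          apply Fin.ext; simp [hc0]
        have hfse1 : (finSumFinEquiv (Sum.inl (1 : Fin 2)) : Fin (2+k)) = c1 := by
          apply Fin.ext; simp [hc1]
        have hdiag0 : ∀ i : Fin (2+k), A i i = 0 := by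
          intro i
          exact ev_zero_of_ne_two _ (hev i) (fun h => hcaseB ⟨i, h⟩)
        have hB : S.toBlocks₁₁ = !![0,2;2,0] := by
          rw [Matrix.eta_fin_two (S.toBlocks₁₁)]
          have e : ∀ x y : Fin 2, S.toBlocks₁₁ x y =
              A (σ (finSumFinEquiv (Sum.inl x))) (σ (finSumFinEquiv (Sum.inl y))) := by
            intro x y; rfl
          rw [e, e, e, e, hfse0, hfse1, hσ0, hσ1, hdiag0, hdiag0, h2v,
            show A j0 i0 = A i0 j0 from hsym.apply i0 j0, h2v]
        have hY : ∀ (x : Fin 2) (j : Fin k), Ev (S.toBlocks₁₂ x j) := by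
          intro x j
          have e : S.toBlocks₁₂ x j =
              A (σ (finSumFinEquiv (Sum.inl x))) (σ (finSumFinEquiv (Sum.inr j))) := rfl
          rw [e]
          apply ev_of_not_odd
          intro hodd
          have := hoffEv _ _ hodd
          have h2 := σ.injective this
          have h3 : (finSumFinEquiv (Sum.inl x) : Fin (2+k)) ≠ finSumFinEquiv (Sum.inr j) := by
            intro h
            exact absurd (finSumFinEquiv.injective h) (by simp)
          exact h3 h2
        set Z4 : Matrix (Fin 2) (Fin k) R4 :=
          Matrix.of ![(fun j => if S.toBlocks₁₂ 1 j = 2 then 1 else 0),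
            (fun j => if S.toBlocks₁₂ 0 j = 2 then 1 else 0)] with hZ4
        set Z := Z4.map (fun z : R4 => ((z.val : ℕ) : ℤ)) with hZdef
        have hZ : S.toBlocks₁₁ * mp Z = -S.toBlocks₁₂ := by
          rw [hZdef, mp_lift]
          ext x j
          fin_cases x <;>
            rw [Matrix.mul_apply, Fin.sum_univ_two, hB] <;>
            simp only [hZ4, Matrix.neg_apply, Matrix.of_apply, Matrix.cons_val',
              Matrix.cons_val_zero, Matrix.cons_val_one, Matrix.head_cons,
              Matrix.cons_val_fin_one, Matrix.empty_val', Fin.mk_zero, Fin.mk_one,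
              Matrix.vecHead, Matrix.vecTail]
          · rcases hY 0 j with h | h <;> rw [h, zero_mul, zero_add] <;> decide
          · rcases hY 1 j with h | h <;> rw [h, zero_mul, add_zero] <;> decide
        obtain ⟨C, hCsym, hCev, hCong⟩ := reduceStep A hsym hev σ Z hZ
        obtain ⟨r', s', t', p', m', hk, hCnf⟩ := IH k (by omega) C hCsym hCev
        have hCong2 : Cong A ((fromBlocks (S.toBlocks₁₁) 0 0 (nfMat k r' s' t' p')).submatrix
            (finSumFinEquiv.symm) (finSumFinEquiv.symm)) :=
          hCong.trans ((Cong.block2 _ hCnf).submatrix finSumFinEquiv.symm)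
        have hCong3 : Cong A ((fromBlocks !![(0:R4),2;2,0] 0 0 (nfMat k r' s' t' p')).submatrix
            (finSumFinEquiv.symm) (finSumFinEquiv.symm)) := by
          rw [← hB]; exact hCong2
        refine ⟨r', s', t'+1, p', m', by omega, ?_⟩
        refine assemble A !![(0:R4),2;2,0] (fun x y => if x = y then 0 else 2) ?_ r' s' t' p'
          r' s' (t'+1) p' (2*r'+2*s') (by omega) hCong3 (key_T r' s' t' p')
        intro x y; fin_cases x <;> fin_cases y <;> simp
      · -- case (d): A ≡ 0 mod 4
        have hA : A = nfMat n 0 0 0 0 := by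
          ext i j
          have hz : nfMat n 0 0 0 0 i j = 0 := by
            show nfR 0 0 0 0 (i:ℕ) (j:ℕ) = 0
            exact nfR_z (by omega) (by omega) (by omega) (by omega)
          rw [hz]
          by_cases hij : i = j
          · subst hij
            exact ev_zero_of_ne_two _ (hev i) (fun h => hcaseB ⟨i, h⟩)
          · have hEv := ev_of_not_odd (A i j) (fun h => hij (hoffEv i j h))
            exact ev_zero_of_ne_two _ hEv (fun h => hcaseC ⟨i, j, hij, h⟩)
        exact ⟨0, 0, 0, 0, n, by omega, hA ▸ Cong.refl A⟩

lemma ev_double : ∀ y : R4, Ev (y + y) := by unfold Ev; decide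

open Matrix in
/-- Every symmetric integer matrix with even diagonal is congruent over ℤ,
modulo 4, to a normal form as in Theorem 1.1. -/
theorem stmt_0 (n : ℕ) (A : Matrix (Fin n) (Fin n) ℤ)
    (hsym : A.IsSymm) (hdiag : ∀ i, Even (A i i)) :
    ∃ P : Matrix (Fin n) (Fin n) ℤ, (P.det = 1 ∨ P.det = -1) ∧
      ∃ r s t p m : ℕ, n = 2*r + 2*s + 2*t + p + m ∧
        ∀ i j : Fin n,
          (((Pᵀ * A * P) i j : ℤ) : ZMod 4) = ((nfEntry r s t p (i : ℕ) (j : ℕ) : ℤ) : ZMod 4) := by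
  have hs4 : (mp A).IsSymm := by
    unfold Matrix.IsSymm at *
    rw [← mp_transpose, hsym]
  have hev4 : ∀ i, Ev ((mp A) i i) := by
    intro i
    obtain ⟨c, hc⟩ := hdiag i
    have h0 : (mp A) i i = ((A i i : ℤ) : R4) := rfl
    rw [h0, hc]
    push_cast
    exact ev_double _
  obtain ⟨r, s, t, p, m, hn, P, hdet, hPE⟩ := mainNF n (mp A) hs4 hev4
  refine ⟨P, hdet, r, s, t, p, m, hn, ?_⟩
  intro i j
  have h1 : (((Pᵀ * A * P) i j : ℤ) : R4) = ((mp P)ᵀ * mp A * mp P) i j := by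
    rw [← mp_transpose, ← mp_mul, ← mp_mul]
    rfl
  rw [h1, hPE]
  exact (nfR_cast r s t p i j).symm
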